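/- arXiv:1605.05583 — 4 statements merged into one kernel-verified Lean document; each statement's English description precedes it below -/
import Mathlib

section
/- Let H, h : [0,R] → ℝ be continuous functions, twice differentiable on (0,R), with H ≥ 0, H(0) − h(0) ≤ 0, H(R) − h(R) ≤ 0, and suppose (H − h)''(r) + (1/r)(H − h)'(r) − (1/r²)(H − h)(r) ≥ 0 on (0,R). Then H(r) ≤ h(r) for all r ∈ [0,R]. -/
open Set Filter Topology

/-- maximum principle for the operator `L u = u'' + u'/r - u/r²` on `[0,R]`:
a subsolution `H - h` which is nonpositive at the endpoints is nonpositive throughout. -/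
theorem maximum_principle_euler_operator
    (R : ℝ) (hR : 0 < R) (H h : ℝ → ℝ)
    (hHc : ContinuousOn H (Icc 0 R)) (hhc : ContinuousOn h (Icc 0 R))
    (hHd : ∀ r ∈ Ioo 0 R, DifferentiableAt ℝ H r ∧ DifferentiableAt ℝ (deriv H) r)
    (hhd : ∀ r ∈ Ioo 0 R, DifferentiableAt ℝ h r ∧ DifferentiableAt ℝ (deriv h) r)
    (hHnn : ∀ r ∈ Icc 0 R, 0 ≤ H r)
    (h0 : H 0 - h 0 ≤ 0) (hRend : H R - h R ≤ 0)
    (hsub : ∀ r ∈ Ioo 0 R,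
      0 ≤ deriv (deriv (fun t => H t - h t)) r + r⁻¹ * deriv (fun t => H t - h t) r
          - (r^2)⁻¹ * (H r - h r)) :
    ∀ r ∈ Icc 0 R, H r ≤ h r := by
  set u : ℝ → ℝ := fun t => H t - h t with hu
  have huc : ContinuousOn u (Icc 0 R) := hHc.sub hhc
  obtain ⟨r₀, hr₀mem, hr₀max⟩ :=
    isCompact_Icc.exists_isMaxOn (nonempty_Icc.2 hR.le) huc
  suffices hle : u r₀ ≤ 0 by
    intro r hr
    have h1 : H r - h r ≤ H r₀ - h r₀ := hr₀max hr
    have h2 : H r₀ - h r₀ ≤ 0 := hle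
    linarith
  by_contra hpos
  push_neg at hpos
  have hr0 : r₀ ≠ 0 := by
    rintro rfl; exact absurd h0 (by simpa [hu] using hpos.not_ge)
  have hrR : r₀ ≠ R := by
    rintro rfl; exact absurd hRend (by simpa [hu] using hpos.not_ge)
  have hIoo : r₀ ∈ Ioo 0 R := ⟨lt_of_le_of_ne hr₀mem.1 (Ne.symm hr0),
    lt_of_le_of_ne hr₀mem.2 hrR⟩
  have hnhds : Icc 0 R ∈ 𝓝 r₀ := Icc_mem_nhds hIoo.1 hIoo.2
  have hlocmax : IsLocalMax u r₀ := by
    filter_upwards [hnhds] with x hx using hr₀max hx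
  have hud : ∀ x ∈ Ioo 0 R, DifferentiableAt ℝ u x := fun x hx =>
    ((hHd x hx).1.sub (hhd x hx).1)
  have hderiv_eq : ∀ x ∈ Ioo 0 R, deriv u x = deriv H x - deriv h x := fun x hx =>
    deriv_sub (hHd x hx).1 (hhd x hx).1
  have hIooNhds : Ioo 0 R ∈ 𝓝 r₀ := isOpen_Ioo.mem_nhds hIoo
  have hEq : deriv u =ᶠ[𝓝 r₀] fun x => deriv H x - deriv h x := by
    filter_upwards [hIooNhds] with x hx using hderiv_eq x hx
  have hdud : DifferentiableAt ℝ (deriv u) r₀ :=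
    (((hHd r₀ hIoo).2.sub (hhd r₀ hIoo).2)).congr_of_eventuallyEq hEq
  have hd1 : deriv u r₀ = 0 := hlocmax.deriv_eq_zero
  have hd2 : deriv (deriv u) r₀ ≤ 0 := by
    by_contra hA
    push_neg at hA
    have hg : HasDerivAt (deriv u) (deriv (deriv u) r₀) r₀ := hdud.hasDerivAt
    have hslope := hasDerivAt_iff_tendsto_slope.1 hg
    have hslope' : Tendsto (slope (deriv u) r₀) (𝓝[>] r₀) (𝓝 (deriv (deriv u) r₀)) :=
      hslope.mono_left (nhdsWithin_mono _ (fun x hx => ne_of_gt hx))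
    have hev : ∀ᶠ x in 𝓝[>] r₀, 0 < slope (deriv u) r₀ x :=
      hslope' (Ioi_mem_nhds hA)
    have hev2 : {x | 0 < deriv u x} ∈ 𝓝[>] r₀ := by
      filter_upwards [hev, self_mem_nhdsWithin] with x hx hx'
      have hxr : 0 < x - r₀ := sub_pos.2 hx'
      have hsl : 0 < (deriv u x - deriv u r₀) / (x - r₀) := by
        simpa [slope_def_field] using hx
      rw [hd1, sub_zero] at hsl
      have := mul_pos hsl hxr
      rwa [div_mul_cancel₀ _ hxr.ne'] at this
    obtain ⟨c, hc, hsub'⟩ := mem_nhdsGT_iff_exists_Ioo_subset.1 hev2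
    -- pick b strictly between r₀ and min c R
    set b : ℝ := min ((r₀ + c) / 2) ((r₀ + R) / 2) with hb
    have hcmem : r₀ < c := hc
    have hrb : r₀ < b := by
      apply lt_min <;> [linarith [hcmem]; linarith [hIoo.2]]
    have hbc : b < c := by
      have : (r₀ + c) / 2 < c := by linarith [hcmem]
      exact lt_of_le_of_lt (min_le_left _ _) this
    have hbR : b < R := by
      have : (r₀ + R) / 2 < R := by linarith [hIoo.2]
      exact lt_of_le_of_lt (min_le_right _ _) this
    have hb0 : 0 < b := lt_trans hIoo.1 hrb
    have hmono : StrictMonoOn u (Icc r₀ b) := by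
      apply strictMonoOn_of_deriv_pos (convex_Icc _ _)
      · exact huc.mono (Icc_subset_Icc hr₀mem.1 hbR.le)
      · intro x hx
        rw [interior_Icc] at hx
        exact hsub' ⟨hx.1, lt_trans hx.2 hbc⟩
    have : u r₀ < u b := hmono (left_mem_Icc.2 hrb.le) (right_mem_Icc.2 hrb.le) hrb
    have hble : u b ≤ u r₀ := hr₀max ⟨hb0.le, hbR.le⟩
    linarith
  have hkey := hsub r₀ hIoo
  have hrsq : 0 < (r₀ ^ 2 : ℝ) := by positivity
  have : deriv (deriv u) r₀ + r₀⁻¹ * deriv u r₀ - (r₀ ^ 2)⁻¹ * u r₀ < 0 := by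
    rw [hd1, mul_zero, add_zero]
    have : 0 < (r₀ ^ 2)⁻¹ * u r₀ := mul_pos (inv_pos.2 hrsq) hpos
    linarith
  simp only [hu] at this
  linarith [hkey, this]
end

section
/- There exist dimensional constants η(n) > 0 and C(n) > 0 such that for any Riemannian n-manifold, the improved Kato inequality |∇|Rm||² ≤ (1 − η(n))|∇Rm|² + C(n)|∇Ric|² holds pointwise. -/
open BigOperators

open Finset


section rots
variable {m : ℕ}

lemma comm3 (f : Fin m → Fin m → Fin m → ℝ) :
    ∑ a, ∑ b, ∑ c, f a b c = ∑ b, ∑ c, ∑ a, f a b c := by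
  rw [Finset.sum_comm]
  exact Finset.sum_congr rfl fun b _ => Finset.sum_comm

lemma comm3' (f : Fin m → Fin m → Fin m → ℝ) :
    ∑ a, ∑ b, ∑ c, f a b c = ∑ c, ∑ a, ∑ b, f a b c :=
  (comm3 (fun c a b => f a b c)).symm

lemma comm4 (f : Fin m → Fin m → Fin m → Fin m → ℝ) :
    ∑ a, ∑ b, ∑ c, ∑ d, f a b c d = ∑ b, ∑ c, ∑ d, ∑ a, f a b c d := by
  rw [Finset.sum_comm]
  exact Finset.sum_congr rfl fun b _ => comm3 _

lemma comm4twice (f : Fin m → Fin m → Fin m → Fin m → ℝ) :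
    ∑ a, ∑ b, ∑ c, ∑ d, f a b c d = ∑ c, ∑ d, ∑ a, ∑ b, f a b c d := by
  rw [comm4 f]
  exact comm4 (fun b c d a => f a b c d)

lemma comm5 (f : Fin m → Fin m → Fin m → Fin m → Fin m → ℝ) :
    ∑ a, ∑ b, ∑ c, ∑ d, ∑ e, f a b c d e = ∑ b, ∑ c, ∑ d, ∑ e, ∑ a, f a b c d e := by
  rw [Finset.sum_comm]
  exact Finset.sum_congr rfl fun b _ => comm4 _

lemma comm6 (f : Fin m → Fin m → Fin m → Fin m → Fin m → Fin m → ℝ) :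
    ∑ a, ∑ b, ∑ c, ∑ d, ∑ e, ∑ g, f a b c d e g
      = ∑ b, ∑ c, ∑ d, ∑ e, ∑ g, ∑ a, f a b c d e g := by
  rw [Finset.sum_comm]
  exact Finset.sum_congr rfl fun b _ => comm5 _

def rot5 (b : Fin m → Fin m → ℝ) (D : Fin m → Fin m → Fin m → Fin m → Fin m → ℝ) :
    Fin m → Fin m → Fin m → Fin m → Fin m → ℝ := fun i j k l p =>
  ∑ a1, b i a1 * ∑ a2, b j a2 * ∑ a3, b k a3 * ∑ a4, b l a4 * ∑ a5, b p a5 * D a1 a2 a3 a4 a5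

def rot4 (b : Fin m → Fin m → ℝ) (R : Fin m → Fin m → Fin m → Fin m → ℝ) :
    Fin m → Fin m → Fin m → Fin m → ℝ := fun i j k l =>
  ∑ a1, b i a1 * ∑ a2, b j a2 * ∑ a3, b k a3 * ∑ a4, b l a4 * R a1 a2 a3 a4

def rot3 (b : Fin m → Fin m → ℝ) (Q : Fin m → Fin m → Fin m → ℝ) :
    Fin m → Fin m → Fin m → ℝ := fun i j p =>
  ∑ a1, b i a1 * ∑ a2, b j a2 * ∑ a3, b p a3 * Q a1 a2 a3

lemma rot5_flat (b : Fin m → Fin m → ℝ) (D : Fin m → Fin m → Fin m → Fin m → Fin m → ℝ)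
    (i j k l p : Fin m) :
    rot5 b D i j k l p = ∑ a1, ∑ a2, ∑ a3, ∑ a4, ∑ a5,
      b i a1 * (b j a2 * (b k a3 * (b l a4 * (b p a5 * D a1 a2 a3 a4 a5)))) := by
  unfold rot5; simp only [Finset.mul_sum]

lemma rot3_flat (b : Fin m → Fin m → ℝ) (Q : Fin m → Fin m → Fin m → ℝ) (i j p : Fin m) :
    rot3 b Q i j p = ∑ a1, ∑ a2, ∑ a3, b i a1 * (b j a2 * (b p a3 * Q a1 a2 a3)) := by
  unfold rot3; simp only [Finset.mul_sum]

lemma rot5_swap12 (b : Fin m → Fin m → ℝ) (D : Fin m → Fin m → Fin m → Fin m → Fin m → ℝ)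
    (h : ∀ i j k l p, D i j k l p = -D j i k l p) (i j k l p : Fin m) :
    rot5 b D i j k l p = - rot5 b D j i k l p := by
  rw [rot5_flat, rot5_flat]
  rw [show -(∑ a1, ∑ a2, ∑ a3, ∑ a4, ∑ a5,
      b j a1 * (b i a2 * (b k a3 * (b l a4 * (b p a5 * D a1 a2 a3 a4 a5)))))
    = ∑ a1, ∑ a2, ∑ a3, ∑ a4, ∑ a5,
      -(b j a1 * (b i a2 * (b k a3 * (b l a4 * (b p a5 * D a1 a2 a3 a4 a5))))) by
    simp only [Finset.sum_neg_distrib]]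
  rw [Finset.sum_comm]
  refine Finset.sum_congr rfl fun a1 _ => Finset.sum_congr rfl fun a2 _ =>
    Finset.sum_congr rfl fun a3 _ => Finset.sum_congr rfl fun a4 _ =>
    Finset.sum_congr rfl fun a5 _ => ?_
  linear_combination (b i a2 * b j a1 * b k a3 * b l a4 * b p a5) * h a2 a1 a3 a4 a5

lemma rot5_swap34 (b : Fin m → Fin m → ℝ) (D : Fin m → Fin m → Fin m → Fin m → Fin m → ℝ)
    (h : ∀ i j k l p, D i j k l p = -D i j l k p) (i j k l p : Fin m) :
    rot5 b D i j k l p = - rot5 b D i j l k p := by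
  rw [rot5_flat, rot5_flat]
  rw [show -(∑ a1, ∑ a2, ∑ a3, ∑ a4, ∑ a5,
      b i a1 * (b j a2 * (b l a3 * (b k a4 * (b p a5 * D a1 a2 a3 a4 a5)))))
    = ∑ a1, ∑ a2, ∑ a3, ∑ a4, ∑ a5,
      -(b i a1 * (b j a2 * (b l a3 * (b k a4 * (b p a5 * D a1 a2 a3 a4 a5))))) by
    simp only [Finset.sum_neg_distrib]]
  refine Finset.sum_congr rfl fun a1 _ => Finset.sum_congr rfl fun a2 _ => ?_
  rw [Finset.sum_comm]
  refine Finset.sum_congr rfl fun a3 _ => Finset.sum_congr rfl fun a4 _ =>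
    Finset.sum_congr rfl fun a5 _ => ?_
  linear_combination (b i a1 * b j a2 * b k a4 * b l a3 * b p a5) * h a1 a2 a4 a3 a5

lemma rot5_pairswap (b : Fin m → Fin m → ℝ) (D : Fin m → Fin m → Fin m → Fin m → Fin m → ℝ)
    (h : ∀ i j k l p, D i j k l p = D k l i j p) (i j k l p : Fin m) :
    rot5 b D i j k l p = rot5 b D k l i j p := by
  rw [rot5_flat, rot5_flat]
  rw [comm4twice]
  refine Finset.sum_congr rfl fun a1 _ => Finset.sum_congr rfl fun a2 _ =>
    Finset.sum_congr rfl fun a3 _ => Finset.sum_congr rfl fun a4 _ =>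
    Finset.sum_congr rfl fun a5 _ => ?_
  linear_combination (b i a3 * b j a4 * b k a1 * b l a2 * b p a5) * h a3 a4 a1 a2 a5

lemma rot5_bianchi (b : Fin m → Fin m → ℝ) (D : Fin m → Fin m → Fin m → Fin m → Fin m → ℝ)
    (hB : ∀ i j k l p, D i j k l p + D i j l p k + D i j p k l = 0) (i j k l p : Fin m) :
    rot5 b D i j k l p + rot5 b D i j l p k + rot5 b D i j p k l = 0 := by
  have h2 : rot5 b D i j l p k = ∑ a1, ∑ a2, ∑ a3, ∑ a4, ∑ a5,
      b i a1 * (b j a2 * (b k a3 * (b l a4 * (b p a5 * D a1 a2 a4 a5 a3)))) := by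
    rw [rot5_flat]
    refine Finset.sum_congr rfl fun a1 _ => Finset.sum_congr rfl fun a2 _ => ?_
    rw [show (∑ a3, ∑ a4, ∑ a5,
        b i a1 * (b j a2 * (b l a3 * (b p a4 * (b k a5 * D a1 a2 a3 a4 a5)))))
      = ∑ x, ∑ y, ∑ z,
        (fun x y z => b i a1 * (b j a2 * (b l x * (b p y * (b k z * D a1 a2 x y z))))) x y z
      from rfl]
    rw [(comm3 (fun z x y => b i a1 * (b j a2 * (b l x * (b p y * (b k z * D a1 a2 x y z)))))).symm]
    refine Finset.sum_congr rfl fun a3 _ => Finset.sum_congr rfl fun a4 _ =>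
      Finset.sum_congr rfl fun a5 _ => ?_
    ring
  have h3 : rot5 b D i j p k l = ∑ a1, ∑ a2, ∑ a3, ∑ a4, ∑ a5,
      b i a1 * (b j a2 * (b k a3 * (b l a4 * (b p a5 * D a1 a2 a5 a3 a4)))) := by
    rw [rot5_flat]
    refine Finset.sum_congr rfl fun a1 _ => Finset.sum_congr rfl fun a2 _ => ?_
    rw [show (∑ a3, ∑ a4, ∑ a5,
        b i a1 * (b j a2 * (b p a3 * (b k a4 * (b l a5 * D a1 a2 a3 a4 a5)))))
      = ∑ x, ∑ y, ∑ z,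
        (fun x y z => b i a1 * (b j a2 * (b p x * (b k y * (b l z * D a1 a2 x y z))))) x y z
      from rfl]
    rw [comm3 (fun x y z => b i a1 * (b j a2 * (b p x * (b k y * (b l z * D a1 a2 x y z)))))]
    refine Finset.sum_congr rfl fun a3 _ => Finset.sum_congr rfl fun a4 _ =>
      Finset.sum_congr rfl fun a5 _ => ?_
    ring
  rw [rot5_flat, h2, h3]
  simp only [← Finset.sum_add_distrib]
  refine Finset.sum_eq_zero fun a1 _ => Finset.sum_eq_zero fun a2 _ =>
    Finset.sum_eq_zero fun a3 _ => Finset.sum_eq_zero fun a4 _ =>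
    Finset.sum_eq_zero fun a5 _ => ?_
  linear_combination (b i a1 * b j a2 * b k a3 * b l a4 * b p a5) * hB a1 a2 a3 a4 a5

lemma rot_bilinear (b : Fin m → Fin m → ℝ)
    (hb : ∀ p q, ∑ i, b i p * b i q = if p = q then (1:ℝ) else 0)
    (x y : Fin m → ℝ) :
    ∑ i, (∑ a, b i a * x a) * (∑ a, b i a * y a) = ∑ a, x a * y a := by
  have h1 : ∀ i, (∑ a, b i a * x a) * (∑ a, b i a * y a)
      = ∑ a, ∑ c, (x a * y c) * (b i a * b i c) := by
    intro i
    rw [Finset.sum_mul_sum]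
    exact Finset.sum_congr rfl fun a _ => Finset.sum_congr rfl fun c _ => by ring
  calc ∑ i, (∑ a, b i a * x a) * (∑ a, b i a * y a)
      = ∑ i, ∑ a, ∑ c, (x a * y c) * (b i a * b i c) :=
        Finset.sum_congr rfl fun i _ => h1 i
    _ = ∑ a, ∑ c, ∑ i, (x a * y c) * (b i a * b i c) := comm3 _
    _ = ∑ a, ∑ c, (x a * y c) * (if a = c then (1:ℝ) else 0) := by
        refine Finset.sum_congr rfl fun a _ => Finset.sum_congr rfl fun c _ => ?_
        rw [← Finset.mul_sum, hb a c]
    _ = ∑ a, x a * y a := by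
        refine Finset.sum_congr rfl fun a _ => ?_
        simp

lemma rot_sq (b : Fin m → Fin m → ℝ)
    (hb : ∀ p q, ∑ i, b i p * b i q = if p = q then (1:ℝ) else 0)
    (x : Fin m → ℝ) :
    ∑ i, (∑ a, b i a * x a)^2 = ∑ a, (x a)^2 := by
  simp only [sq]
  exact rot_bilinear b hb x x

lemma rot5_contract (b : Fin m → Fin m → ℝ)
    (hb : ∀ p q, ∑ i, b i p * b i q = if p = q then (1:ℝ) else 0)
    (D : Fin m → Fin m → Fin m → Fin m → Fin m → ℝ) (Q : Fin m → Fin m → Fin m → ℝ)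
    (hC : ∀ i j p, Q i j p = ∑ a, D a i j a p) (i j p : Fin m) :
    ∑ a, rot5 b D a i j a p = rot3 b Q i j p := by
  calc ∑ a, rot5 b D a i j a p
      = ∑ a, ∑ a1, ∑ a2, ∑ a3, ∑ a4, ∑ a5,
          b a a1 * (b i a2 * (b j a3 * (b a a4 * (b p a5 * D a1 a2 a3 a4 a5)))) :=
        Finset.sum_congr rfl fun a _ => rot5_flat b D a i j a p
    _ = ∑ a1, ∑ a2, ∑ a3, ∑ a4, ∑ a5, ∑ a,
          b a a1 * (b i a2 * (b j a3 * (b a a4 * (b p a5 * D a1 a2 a3 a4 a5)))) := comm6 _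
    _ = ∑ a1, ∑ a2, ∑ a3, ∑ a4, ∑ a5,
          (if a1 = a4 then (1:ℝ) else 0) * (b i a2 * (b j a3 * (b p a5 * D a1 a2 a3 a4 a5))) := by
        refine Finset.sum_congr rfl fun a1 _ => Finset.sum_congr rfl fun a2 _ =>
          Finset.sum_congr rfl fun a3 _ => Finset.sum_congr rfl fun a4 _ =>
          Finset.sum_congr rfl fun a5 _ => ?_
        rw [Finset.sum_congr rfl (fun a (_ : a ∈ Finset.univ) =>
          show b a a1 * (b i a2 * (b j a3 * (b a a4 * (b p a5 * D a1 a2 a3 a4 a5))))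
            = (b a a1 * b a a4) * (b i a2 * (b j a3 * (b p a5 * D a1 a2 a3 a4 a5))) by ring)]
        rw [← Finset.sum_mul, hb a1 a4]
    _ = ∑ a1, ∑ a2, ∑ a3, ∑ a5, b i a2 * (b j a3 * (b p a5 * D a1 a2 a3 a1 a5)) := by
        refine Finset.sum_congr rfl fun a1 _ => Finset.sum_congr rfl fun a2 _ =>
          Finset.sum_congr rfl fun a3 _ => ?_
        simp [ite_mul, Finset.sum_ite_irrel, Finset.sum_ite_eq]
    _ = ∑ a2, ∑ a3, ∑ a5, b i a2 * (b j a3 * (b p a5 * ∑ a1, D a1 a2 a3 a1 a5)) := by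
        rw [comm4]
        refine Finset.sum_congr rfl fun a2 _ => Finset.sum_congr rfl fun a3 _ =>
          Finset.sum_congr rfl fun a5 _ => ?_
        simp only [← Finset.mul_sum]
    _ = rot3 b Q i j p := by
        rw [rot3_flat]
        refine Finset.sum_congr rfl fun a2 _ => Finset.sum_congr rfl fun a3 _ =>
          Finset.sum_congr rfl fun a5 _ => ?_
        rw [(hC a2 a3 a5).symm]


lemma rot5_norm (b : Fin m → Fin m → ℝ)
    (hb : ∀ p q, ∑ i, b i p * b i q = if p = q then (1:ℝ) else 0)
    (D : Fin m → Fin m → Fin m → Fin m → Fin m → ℝ) :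
    ∑ i, ∑ j, ∑ k, ∑ l, ∑ p, (rot5 b D i j k l p)^2
      = ∑ i, ∑ j, ∑ k, ∑ l, ∑ p, (D i j k l p)^2 := by
  calc ∑ i, ∑ j, ∑ k, ∑ l, ∑ p, (rot5 b D i j k l p)^2
      = ∑ j, ∑ k, ∑ l, ∑ p, ∑ i, (rot5 b D i j k l p)^2 := comm5 _
    _ = ∑ j, ∑ k, ∑ l, ∑ p, ∑ a1,
          (∑ a2, b j a2 * ∑ a3, b k a3 * ∑ a4, b l a4 * ∑ a5, b p a5 * D a1 a2 a3 a4 a5)^2 := by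
        refine Finset.sum_congr rfl fun j _ => Finset.sum_congr rfl fun k _ =>
          Finset.sum_congr rfl fun l _ => Finset.sum_congr rfl fun p _ => ?_
        exact rot_sq b hb
          (fun a => ∑ a2, b j a2 * ∑ a3, b k a3 * ∑ a4, b l a4 * ∑ a5, b p a5 * D a a2 a3 a4 a5)
    _ = ∑ k, ∑ l, ∑ p, ∑ a1, ∑ j,
          (∑ a2, b j a2 * ∑ a3, b k a3 * ∑ a4, b l a4 * ∑ a5, b p a5 * D a1 a2 a3 a4 a5)^2 :=
        comm5 _
    _ = ∑ k, ∑ l, ∑ p, ∑ a1, ∑ a2,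
          (∑ a3, b k a3 * ∑ a4, b l a4 * ∑ a5, b p a5 * D a1 a2 a3 a4 a5)^2 := by
        refine Finset.sum_congr rfl fun k _ => Finset.sum_congr rfl fun l _ =>
          Finset.sum_congr rfl fun p _ => Finset.sum_congr rfl fun a1 _ => ?_
        exact rot_sq b hb
          (fun a => ∑ a3, b k a3 * ∑ a4, b l a4 * ∑ a5, b p a5 * D a1 a a3 a4 a5)
    _ = ∑ l, ∑ p, ∑ a1, ∑ a2, ∑ k,
          (∑ a3, b k a3 * ∑ a4, b l a4 * ∑ a5, b p a5 * D a1 a2 a3 a4 a5)^2 := comm5 _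
    _ = ∑ l, ∑ p, ∑ a1, ∑ a2, ∑ a3,
          (∑ a4, b l a4 * ∑ a5, b p a5 * D a1 a2 a3 a4 a5)^2 := by
        refine Finset.sum_congr rfl fun l _ => Finset.sum_congr rfl fun p _ =>
          Finset.sum_congr rfl fun a1 _ => Finset.sum_congr rfl fun a2 _ => ?_
        exact rot_sq b hb (fun a => ∑ a4, b l a4 * ∑ a5, b p a5 * D a1 a2 a a4 a5)
    _ = ∑ p, ∑ a1, ∑ a2, ∑ a3, ∑ l,
          (∑ a4, b l a4 * ∑ a5, b p a5 * D a1 a2 a3 a4 a5)^2 := comm5 _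
    _ = ∑ p, ∑ a1, ∑ a2, ∑ a3, ∑ a4, (∑ a5, b p a5 * D a1 a2 a3 a4 a5)^2 := by
        refine Finset.sum_congr rfl fun p _ => Finset.sum_congr rfl fun a1 _ =>
          Finset.sum_congr rfl fun a2 _ => Finset.sum_congr rfl fun a3 _ => ?_
        exact rot_sq b hb (fun a => ∑ a5, b p a5 * D a1 a2 a3 a a5)
    _ = ∑ a1, ∑ a2, ∑ a3, ∑ a4, ∑ p, (∑ a5, b p a5 * D a1 a2 a3 a4 a5)^2 := comm5 _
    _ = ∑ i, ∑ j, ∑ k, ∑ l, ∑ p, (D i j k l p)^2 := by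
        refine Finset.sum_congr rfl fun a1 _ => Finset.sum_congr rfl fun a2 _ =>
          Finset.sum_congr rfl fun a3 _ => Finset.sum_congr rfl fun a4 _ => ?_
        exact rot_sq b hb (fun a => D a1 a2 a3 a4 a)

lemma rot4_norm (b : Fin m → Fin m → ℝ)
    (hb : ∀ p q, ∑ i, b i p * b i q = if p = q then (1:ℝ) else 0)
    (R : Fin m → Fin m → Fin m → Fin m → ℝ) :
    ∑ i, ∑ j, ∑ k, ∑ l, (rot4 b R i j k l)^2 = ∑ i, ∑ j, ∑ k, ∑ l, (R i j k l)^2 := by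
  calc ∑ i, ∑ j, ∑ k, ∑ l, (rot4 b R i j k l)^2
      = ∑ j, ∑ k, ∑ l, ∑ i, (rot4 b R i j k l)^2 := comm4 _
    _ = ∑ j, ∑ k, ∑ l, ∑ a1, (∑ a2, b j a2 * ∑ a3, b k a3 * ∑ a4, b l a4 * R a1 a2 a3 a4)^2 := by
        refine Finset.sum_congr rfl fun j _ => Finset.sum_congr rfl fun k _ =>
          Finset.sum_congr rfl fun l _ => ?_
        exact rot_sq b hb (fun a => ∑ a2, b j a2 * ∑ a3, b k a3 * ∑ a4, b l a4 * R a a2 a3 a4)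
    _ = ∑ k, ∑ l, ∑ a1, ∑ j, (∑ a2, b j a2 * ∑ a3, b k a3 * ∑ a4, b l a4 * R a1 a2 a3 a4)^2 :=
        comm4 _
    _ = ∑ k, ∑ l, ∑ a1, ∑ a2, (∑ a3, b k a3 * ∑ a4, b l a4 * R a1 a2 a3 a4)^2 := by
        refine Finset.sum_congr rfl fun k _ => Finset.sum_congr rfl fun l _ =>
          Finset.sum_congr rfl fun a1 _ => ?_
        exact rot_sq b hb (fun a => ∑ a3, b k a3 * ∑ a4, b l a4 * R a1 a a3 a4)
    _ = ∑ l, ∑ a1, ∑ a2, ∑ k, (∑ a3, b k a3 * ∑ a4, b l a4 * R a1 a2 a3 a4)^2 := comm4 _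
    _ = ∑ l, ∑ a1, ∑ a2, ∑ a3, (∑ a4, b l a4 * R a1 a2 a3 a4)^2 := by
        refine Finset.sum_congr rfl fun l _ => Finset.sum_congr rfl fun a1 _ =>
          Finset.sum_congr rfl fun a2 _ => ?_
        exact rot_sq b hb (fun a => ∑ a4, b l a4 * R a1 a2 a a4)
    _ = ∑ a1, ∑ a2, ∑ a3, ∑ l, (∑ a4, b l a4 * R a1 a2 a3 a4)^2 := comm4 _
    _ = ∑ i, ∑ j, ∑ k, ∑ l, (R i j k l)^2 := by
        refine Finset.sum_congr rfl fun a1 _ => Finset.sum_congr rfl fun a2 _ =>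
          Finset.sum_congr rfl fun a3 _ => ?_
        exact rot_sq b hb (fun a => R a1 a2 a3 a)

lemma rot45_pair (b : Fin m → Fin m → ℝ)
    (hb : ∀ p q, ∑ i, b i p * b i q = if p = q then (1:ℝ) else 0)
    (D : Fin m → Fin m → Fin m → Fin m → Fin m → ℝ)
    (R : Fin m → Fin m → Fin m → Fin m → ℝ) (p : Fin m) :
    ∑ i, ∑ j, ∑ k, ∑ l, rot5 b D i j k l p * rot4 b R i j k l
      = ∑ e, b p e * ∑ i, ∑ j, ∑ k, ∑ l, D i j k l e * R i j k l := by
  calc ∑ i, ∑ j, ∑ k, ∑ l, rot5 b D i j k l p * rot4 b R i j k l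
      = ∑ j, ∑ k, ∑ l, ∑ i, rot5 b D i j k l p * rot4 b R i j k l := comm4 _
    _ = ∑ j, ∑ k, ∑ l, ∑ a1,
          (∑ a2, b j a2 * ∑ a3, b k a3 * ∑ a4, b l a4 * ∑ a5, b p a5 * D a1 a2 a3 a4 a5)
            * (∑ a2, b j a2 * ∑ a3, b k a3 * ∑ a4, b l a4 * R a1 a2 a3 a4) := by
        refine Finset.sum_congr rfl fun j _ => Finset.sum_congr rfl fun k _ =>
          Finset.sum_congr rfl fun l _ => ?_
        exact rot_bilinear b hb
          (fun a => ∑ a2, b j a2 * ∑ a3, b k a3 * ∑ a4, b l a4 * ∑ a5, b p a5 * D a a2 a3 a4 a5)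
          (fun a => ∑ a2, b j a2 * ∑ a3, b k a3 * ∑ a4, b l a4 * R a a2 a3 a4)
    _ = ∑ k, ∑ l, ∑ a1, ∑ j,
          (∑ a2, b j a2 * ∑ a3, b k a3 * ∑ a4, b l a4 * ∑ a5, b p a5 * D a1 a2 a3 a4 a5)
            * (∑ a2, b j a2 * ∑ a3, b k a3 * ∑ a4, b l a4 * R a1 a2 a3 a4) := comm4 _
    _ = ∑ k, ∑ l, ∑ a1, ∑ a2,
          (∑ a3, b k a3 * ∑ a4, b l a4 * ∑ a5, b p a5 * D a1 a2 a3 a4 a5)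
            * (∑ a3, b k a3 * ∑ a4, b l a4 * R a1 a2 a3 a4) := by
        refine Finset.sum_congr rfl fun k _ => Finset.sum_congr rfl fun l _ =>
          Finset.sum_congr rfl fun a1 _ => ?_
        exact rot_bilinear b hb
          (fun a => ∑ a3, b k a3 * ∑ a4, b l a4 * ∑ a5, b p a5 * D a1 a a3 a4 a5)
          (fun a => ∑ a3, b k a3 * ∑ a4, b l a4 * R a1 a a3 a4)
    _ = ∑ l, ∑ a1, ∑ a2, ∑ k,
          (∑ a3, b k a3 * ∑ a4, b l a4 * ∑ a5, b p a5 * D a1 a2 a3 a4 a5)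
            * (∑ a3, b k a3 * ∑ a4, b l a4 * R a1 a2 a3 a4) := comm4 _
    _ = ∑ l, ∑ a1, ∑ a2, ∑ a3,
          (∑ a4, b l a4 * ∑ a5, b p a5 * D a1 a2 a3 a4 a5)
            * (∑ a4, b l a4 * R a1 a2 a3 a4) := by
        refine Finset.sum_congr rfl fun l _ => Finset.sum_congr rfl fun a1 _ =>
          Finset.sum_congr rfl fun a2 _ => ?_
        exact rot_bilinear b hb
          (fun a => ∑ a4, b l a4 * ∑ a5, b p a5 * D a1 a2 a a4 a5)
          (fun a => ∑ a4, b l a4 * R a1 a2 a a4)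
    _ = ∑ a1, ∑ a2, ∑ a3, ∑ l,
          (∑ a4, b l a4 * ∑ a5, b p a5 * D a1 a2 a3 a4 a5)
            * (∑ a4, b l a4 * R a1 a2 a3 a4) := comm4 _
    _ = ∑ a1, ∑ a2, ∑ a3, ∑ a4,
          (∑ a5, b p a5 * D a1 a2 a3 a4 a5) * R a1 a2 a3 a4 := by
        refine Finset.sum_congr rfl fun a1 _ => Finset.sum_congr rfl fun a2 _ =>
          Finset.sum_congr rfl fun a3 _ => ?_
        exact rot_bilinear b hb
          (fun a => ∑ a5, b p a5 * D a1 a2 a3 a a5) (fun a => R a1 a2 a3 a)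
    _ = ∑ a1, ∑ a2, ∑ a3, ∑ a4, ∑ a5, b p a5 * (D a1 a2 a3 a4 a5 * R a1 a2 a3 a4) := by
        refine Finset.sum_congr rfl fun a1 _ => Finset.sum_congr rfl fun a2 _ =>
          Finset.sum_congr rfl fun a3 _ => Finset.sum_congr rfl fun a4 _ => ?_
        rw [Finset.sum_mul]
        exact Finset.sum_congr rfl fun a5 _ => by ring
    _ = ∑ a5, ∑ a1, ∑ a2, ∑ a3, ∑ a4, b p a5 * (D a1 a2 a3 a4 a5 * R a1 a2 a3 a4) :=
        (comm5 (fun a5 a1 a2 a3 a4 => b p a5 * (D a1 a2 a3 a4 a5 * R a1 a2 a3 a4))).symm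
    _ = ∑ e, b p e * ∑ i, ∑ j, ∑ k, ∑ l, D i j k l e * R i j k l := by
        refine Finset.sum_congr rfl fun a5 _ => ?_
        simp only [← Finset.mul_sum]

lemma rot3_E_bound (b : Fin m → Fin m → ℝ)
    (hb : ∀ p q, ∑ i, b i p * b i q = if p = q then (1:ℝ) else 0)
    (Q : Fin m → Fin m → Fin m → ℝ) (z : Fin m)
    (hunit : ∑ e, b z e * b z e = 1) :
    ∑ i, ∑ j, (rot3 b Q i j z)^2 ≤ ∑ i, ∑ j, ∑ p, (Q i j p)^2 := by
  have step : ∑ i, ∑ j, (rot3 b Q i j z)^2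
      = ∑ a1, ∑ a2, (∑ a3, b z a3 * Q a1 a2 a3)^2 := by
    calc ∑ i, ∑ j, (rot3 b Q i j z)^2
        = ∑ j, ∑ i, (rot3 b Q i j z)^2 := Finset.sum_comm
      _ = ∑ j, ∑ a1, (∑ a2, b j a2 * ∑ a3, b z a3 * Q a1 a2 a3)^2 := by
          refine Finset.sum_congr rfl fun j _ => ?_
          exact rot_sq b hb (fun a => ∑ a2, b j a2 * ∑ a3, b z a3 * Q a a2 a3)
      _ = ∑ a1, ∑ j, (∑ a2, b j a2 * ∑ a3, b z a3 * Q a1 a2 a3)^2 := Finset.sum_comm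
      _ = ∑ a1, ∑ a2, (∑ a3, b z a3 * Q a1 a2 a3)^2 := by
          refine Finset.sum_congr rfl fun a1 _ => ?_
          exact rot_sq b hb (fun a => ∑ a3, b z a3 * Q a1 a a3)
  rw [step]
  refine Finset.sum_le_sum fun a1 _ => Finset.sum_le_sum fun a2 _ => ?_
  have hcs := Finset.sum_mul_sq_le_sq_mul_sq Finset.univ (fun e => b z e) (fun e => Q a1 a2 e)
  have h1 : ∑ e, (b z e)^2 = 1 := by
    rw [← hunit]; exact Finset.sum_congr rfl fun e _ => sq (b z e) ▸ by rw [sq]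
  calc (∑ a3, b z a3 * Q a1 a2 a3)^2 ≤ (∑ e, (b z e)^2) * ∑ e, (Q a1 a2 e)^2 := hcs
    _ = ∑ p, (Q a1 a2 p)^2 := by rw [h1, one_mul]

end rots


lemma householder {m : ℕ} (w : Fin m → ℝ) (hw : ∑ i, w i * w i = 1) (z : Fin m) :
    ∃ b : Fin m → Fin m → ℝ,
      (∀ p q, ∑ i, b i p * b i q = if p = q then (1:ℝ) else 0) ∧
      (∀ i, b z i = w i) := by
  classical
  set u : Fin m → ℝ := fun i => w i - (if i = z then 1 else 0) with hu
  set U : ℝ := ∑ i, u i * u i with hU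
  refine ⟨fun q i => (if q = i then 1 else 0) - 2 * u q * u i / U, ?_, ?_⟩
  · intro p q
    show ∑ i, ((if i = p then (1:ℝ) else 0) - 2 * u i * u p / U)
        * ((if i = q then (1:ℝ) else 0) - 2 * u i * u q / U) = if p = q then 1 else 0
    have e1 : ∑ i, (if i = p then (1:ℝ) else 0) * (if i = q then (1:ℝ) else 0)
        = if p = q then (1:ℝ) else 0 := by
      by_cases h : p = q
      · subst h; simp
      · simp [Finset.sum_ite_eq', h]
        try exact Ne.symm h
    have e2 : ∑ i, (if i = p then (1:ℝ) else 0) * u i = u p := by simp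
    have e3 : ∑ i, (if i = q then (1:ℝ) else 0) * u i = u q := by simp
    have expand : ∀ i ∈ Finset.univ,
        ((if i = p then (1:ℝ) else 0) - 2 * u i * u p / U) *
          ((if i = q then (1:ℝ) else 0) - 2 * u i * u q / U)
        = ((if i = p then (1:ℝ) else 0) * (if i = q then (1:ℝ) else 0)
            - (2 * u q / U) * ((if i = p then (1:ℝ) else 0) * u i))
            - (2 * u p / U) * ((if i = q then (1:ℝ) else 0) * u i)
            + (4 * u p * u q / (U * U)) * (u i * u i) := by
      intro i _; ring
    rw [Finset.sum_congr rfl expand]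
    rw [Finset.sum_add_distrib, Finset.sum_sub_distrib, Finset.sum_sub_distrib,
      ← Finset.mul_sum, ← Finset.mul_sum, ← Finset.mul_sum, e1, e2, e3, ← hU]
    by_cases hU0 : U = 0
    · have hz : ∀ i, u i = 0 := fun i => mul_self_eq_zero.mp
        ((Finset.sum_eq_zero_iff_of_nonneg
          (fun j _ => mul_self_nonneg (u j))).mp (hU.symm.trans hU0) i (Finset.mem_univ i))
      simp [hz p, hz q]
    · field_simp
      split_ifs <;> ring
  · intro i
    show (if z = i then (1:ℝ) else 0) - 2 * u z * u i / U = w i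
    have expand2 : ∀ i ∈ Finset.univ, u i * u i
        = w i * w i - 2 * ((if i = z then (1:ℝ) else 0) * w i)
          + (if i = z then (1:ℝ) else 0) * (if i = z then (1:ℝ) else 0) := by
      intro i _; simp only [hu]; ring
    have hUval : U = 2 - 2 * w z := by
      have hA : ∑ i, (if i = z then (1:ℝ) else 0) * w i = w z := by simp
      have hB : ∑ i, (if i = z then (1:ℝ) else 0) * (if i = z then (1:ℝ) else 0) = 1 := by simp
      rw [hU, Finset.sum_congr rfl expand2, Finset.sum_add_distrib, Finset.sum_sub_distrib,
        ← Finset.mul_sum, hw, hA, hB]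
      ring
    by_cases hU0 : U = 0
    · have hz : ∀ j, u j = 0 := fun j => mul_self_eq_zero.mp
        ((Finset.sum_eq_zero_iff_of_nonneg
          (fun j _ => mul_self_nonneg (u j))).mp (hU.symm.trans hU0) j (Finset.mem_univ j))
      have hi : w i = if i = z then 1 else 0 := by
        have h := hz i; simp only [hu] at h; linarith [h]
      rw [hz z, hi]
      by_cases h : i = z
      · subst h; simp
      · have : ¬ z = i := Ne.symm h
        simp [h, this]
    · have hUz : -2 * u z = U := by rw [hUval]; simp only [hu]; simp; ring
      have h2 : 2 * u z * u i = -(U * u i) := by linear_combination (-(u i)) * hUz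
      rw [h2, show -(U * u i) / U = -(u i) by field_simp]
      by_cases h : i = z
      · subst h; simp [hu]
      · have hzi : ¬ z = i := fun hh => h hh.symm
        simp [hu, hzi, h]


lemma le_sum4' {m : ℕ} (g : Fin m → Fin m → Fin m → Fin m → ℝ)
    (hg : ∀ i j k l, 0 ≤ g i j k l) (i j k l : Fin m) :
    g i j k l ≤ ∑ i, ∑ j, ∑ k, ∑ l, g i j k l := by
  calc g i j k l ≤ ∑ l, g i j k l :=
        Finset.single_le_sum (fun x _ => hg i j k x) (Finset.mem_univ l)
    _ ≤ ∑ k, ∑ l, g i j k l :=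
        Finset.single_le_sum (fun x _ => Finset.sum_nonneg fun y _ => hg i j x y)
          (Finset.mem_univ k)
    _ ≤ ∑ j, ∑ k, ∑ l, g i j k l :=
        Finset.single_le_sum
          (fun x _ => Finset.sum_nonneg fun y _ => Finset.sum_nonneg fun z _ => hg i x y z)
          (Finset.mem_univ j)
    _ ≤ ∑ i, ∑ j, ∑ k, ∑ l, g i j k l :=
        Finset.single_le_sum
          (fun x _ => Finset.sum_nonneg fun y _ => Finset.sum_nonneg fun z _ =>
            Finset.sum_nonneg fun t _ => hg x y z t)
          (Finset.mem_univ i)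

lemma le_sum2' {m : ℕ} (g : Fin m → Fin m → ℝ)
    (hg : ∀ i j, 0 ≤ g i j) (i j : Fin m) :
    g i j ≤ ∑ i, ∑ j, g i j := by
  calc g i j ≤ ∑ j, g i j := Finset.single_le_sum (fun x _ => hg i x) (Finset.mem_univ j)
    _ ≤ ∑ i, ∑ j, g i j :=
        Finset.single_le_sum (fun x _ => Finset.sum_nonneg fun y _ => hg x y)
          (Finset.mem_univ i)

lemma frame_lemma {n : ℕ}
    (D : Fin (n+1) → Fin (n+1) → Fin (n+1) → Fin (n+1) → Fin (n+1) → ℝ)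
    (DRic : Fin (n+1) → Fin (n+1) → Fin (n+1) → ℝ)
    (hD1 : ∀ i j k l p, D i j k l p = -D j i k l p)
    (hD2 : ∀ i j k l p, D i j k l p = -D i j l k p)
    (hD3 : ∀ i j k l p, D i j k l p = D k l i j p)
    (hB : ∀ i j k l p, D i j k l p + D i j l p k + D i j p k l = 0)
    (hC : ∀ i j p, DRic i j p = ∑ a, D a i j a p) :
    (∑ i, ∑ j, ∑ k, ∑ l, (D i j k l 0)^2) ≤
      ((n+1:ℝ)^4 * (8*(n+1:ℝ)^2+2)) *
        (((∑ i, ∑ j, ∑ k, ∑ l, ∑ p, (D i j k l p)^2)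
            - ∑ i, ∑ j, ∑ k, ∑ l, (D i j k l 0)^2)
          + ∑ i, ∑ j, (DRic i j 0)^2) := by
  set S : ℝ := ∑ i, ∑ j, ∑ k, ∑ l, ∑ p, (D i j k l p)^2 with hSdef
  set T0 : ℝ := ∑ i, ∑ j, ∑ k, ∑ l, (D i j k l 0)^2 with hT0def
  set E0 : ℝ := ∑ i, ∑ j, (DRic i j 0)^2 with hE0def
  have hg_nonneg : ∀ i j k l, 0 ≤ (∑ p, (D i j k l p)^2) - (D i j k l 0)^2 := by
    intro i j k l
    have := Finset.single_le_sum (fun p (_ : p ∈ Finset.univ) => sq_nonneg (D i j k l p))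
      (Finset.mem_univ (0 : Fin (n+1)))
    linarith
  have hrest_eq : S - T0 = ∑ i, ∑ j, ∑ k, ∑ l, ((∑ p, (D i j k l p)^2) - (D i j k l 0)^2) := by
    simp only [Finset.sum_sub_distrib]
    rw [hSdef, hT0def]
  have rest_nonneg : 0 ≤ S - T0 := by
    rw [hrest_eq]
    exact Finset.sum_nonneg fun i _ => Finset.sum_nonneg fun j _ =>
      Finset.sum_nonneg fun k _ => Finset.sum_nonneg fun l _ => hg_nonneg i j k l
  have E0_nonneg : 0 ≤ E0 := by
    rw [hE0def]
    exact Finset.sum_nonneg fun i _ => Finset.sum_nonneg fun j _ => sq_nonneg _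
  have pb : ∀ i j k l q, q ≠ 0 → (D i j k l q)^2 ≤ S - T0 := by
    intro i j k l q hq
    have h1 : (D i j k l 0)^2 + (D i j k l q)^2 ≤ ∑ p, (D i j k l p)^2 := by
      rw [← Finset.add_sum_erase Finset.univ (fun p => (D i j k l p)^2)
        (Finset.mem_univ (0 : Fin (n+1)))]
      exact add_le_add le_rfl
        (Finset.single_le_sum (fun p _ => sq_nonneg (D i j k l p))
          (Finset.mem_erase.mpr ⟨hq, Finset.mem_univ q⟩))
    have h2 : (D i j k l q)^2 ≤ (∑ p, (D i j k l p)^2) - (D i j k l 0)^2 := by linarith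
    rw [hrest_eq]
    exact le_trans h2 (le_sum4' _ hg_nonneg i j k l)
  have hA : ∀ i j k l, k ≠ 0 → l ≠ 0 → (D i j k l 0)^2 ≤ 4 * (S - T0) := by
    intro i j k l hk hl
    have e : D i j k l 0 = -(D i j l 0 k + D i j 0 k l) := by linarith [hB i j k l 0]
    rw [e]
    nlinarith [pb i j l 0 k hk, pb i j 0 k l hl, sq_nonneg (D i j l 0 k - D i j 0 k l)]
  have hGood : ∀ i j k l, (k ≠ 0 ∧ l ≠ 0) ∨ (i ≠ 0 ∧ j ≠ 0) →
      (D i j k l 0)^2 ≤ 4 * (S - T0) := by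
    rintro i j k l (⟨hk, hl⟩ | ⟨hi, hj⟩)
    · exact hA i j k l hk hl
    · rw [hD3 i j k l 0]; exact hA k l i j hi hj
  have hCore : ∀ bb dd, bb ≠ 0 → dd ≠ 0 →
      (D 0 bb 0 dd 0)^2 ≤ 8*(n+1:ℝ)^2*(S - T0) + 2*E0 := by
    intro bb dd hbb hdd
    have hsplit : D 0 bb 0 dd 0
        = (∑ a ∈ Finset.univ.erase 0, D a bb dd a 0) - DRic bb dd 0 := by
      have h := hC bb dd 0
      rw [← Finset.add_sum_erase Finset.univ (fun a => D a bb dd a 0)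
        (Finset.mem_univ (0 : Fin (n+1)))] at h
      have h2 : D 0 bb dd 0 0 = -D 0 bb 0 dd 0 := by linarith [hD2 0 bb dd 0 0]
      linarith
    have hn1 : (1:ℝ) ≤ (n:ℝ)+1 := by
      have : (0:ℝ) ≤ (n:ℝ) := Nat.cast_nonneg n
      linarith
    have hcard : ((Finset.univ.erase (0 : Fin (n+1))).card : ℝ) ≤ (n:ℝ)+1 := by
      have : (Finset.univ.erase (0 : Fin (n+1))).card ≤ Finset.univ.card :=
        Finset.card_le_card (Finset.erase_subset _ _)
      have h2 : (Finset.univ : Finset (Fin (n+1))).card = n+1 := by simp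
      rw [h2] at this
      exact_mod_cast le_trans (Nat.cast_le.mpr this) (by push_cast; linarith)
    have hY : (∑ a ∈ Finset.univ.erase 0, D a bb dd a 0)^2
        ≤ ((n:ℝ)+1) * ∑ a ∈ Finset.univ.erase 0, (D a bb dd a 0)^2 := by
      have hcs := Finset.sum_mul_sq_le_sq_mul_sq (Finset.univ.erase 0)
        (fun _ => (1:ℝ)) (fun a => D a bb dd a 0)
      simp only [one_pow, one_mul, Finset.sum_const, nsmul_eq_mul, mul_one] at hcs
      have hnn : 0 ≤ ∑ a ∈ Finset.univ.erase 0, (D a bb dd a 0)^2 :=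
        Finset.sum_nonneg fun a _ => sq_nonneg _
      calc (∑ a ∈ Finset.univ.erase 0, D a bb dd a 0)^2
          ≤ ((Finset.univ.erase (0:Fin (n+1))).card : ℝ)
              * ∑ a ∈ Finset.univ.erase 0, (D a bb dd a 0)^2 := hcs
        _ ≤ ((n:ℝ)+1) * ∑ a ∈ Finset.univ.erase 0, (D a bb dd a 0)^2 := by
            exact mul_le_mul_of_nonneg_right hcard hnn
    have hsum_bound : ∑ a ∈ Finset.univ.erase 0, (D a bb dd a 0)^2
        ≤ ((n:ℝ)+1) * (4 * (S - T0)) := by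
      have := Finset.sum_le_card_nsmul (Finset.univ.erase (0:Fin (n+1)))
        (fun a => (D a bb dd a 0)^2) (4 * (S - T0))
        (fun a ha => hA a bb dd a hdd (Finset.mem_erase.mp ha).1)
      rw [nsmul_eq_mul] at this
      calc ∑ a ∈ Finset.univ.erase 0, (D a bb dd a 0)^2
          ≤ ((Finset.univ.erase (0:Fin (n+1))).card : ℝ) * (4 * (S - T0)) := this
        _ ≤ ((n:ℝ)+1) * (4 * (S - T0)) := by
            apply mul_le_mul_of_nonneg_right hcard; linarith
    have hDRicB : (DRic bb dd 0)^2 ≤ E0 := by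
      rw [hE0def]
      exact le_sum2' (fun i j => (DRic i j 0)^2) (fun i j => sq_nonneg _) bb dd
    rw [hsplit]
    nlinarith [hY, hsum_bound, hDRicB,
      sq_nonneg ((∑ a ∈ Finset.univ.erase 0, D a bb dd a 0) + DRic bb dd 0)]
  have hz1 : ∀ i k l p, D i i k l p = 0 := fun i k l p => by linarith [hD1 i i k l p]
  have hz2 : ∀ i j k p, D i j k k p = 0 := fun i j k p => by linarith [hD2 i j k k p]
  set c : ℝ := 8*(n+1:ℝ)^2+2 with hcdef
  have hn1 : (1:ℝ) ≤ (n:ℝ)+1 := by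
    have : (0:ℝ) ≤ (n:ℝ) := Nat.cast_nonneg n
    linarith
  have hc4 : 4 ≤ c := by nlinarith
  have hcpos : 0 < c := by nlinarith
  have hQ1 : 4*(S-T0) ≤ c*((S-T0)+E0) := by nlinarith
  have hQ2 : 8*(n+1:ℝ)^2*(S-T0) + 2*E0 ≤ c*((S-T0)+E0) := by nlinarith
  have hQ0 : 0 ≤ c*((S-T0)+E0) := by nlinarith
  have hpt : ∀ i j k l, (D i j k l 0)^2 ≤ c*((S-T0)+E0) := by
    intro i j k l
    rcases eq_or_ne k 0 with hk | hk <;> rcases eq_or_ne l 0 with hl | hl <;>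
      rcases eq_or_ne i 0 with hi | hi <;> rcases eq_or_ne j 0 with hj | hj
    all_goals try (subst hk; subst hl; rw [hz2]; simpa using hQ0)
    all_goals try (exact le_trans (hGood i j k l (Or.inl ⟨hk, hl⟩)) hQ1)
    all_goals try (exact le_trans (hGood i j k l (Or.inr ⟨hi, hj⟩)) hQ1)
    all_goals try (subst hi; subst hj; rw [hz1]; simpa using hQ0)
    -- remaining: one of k,l is 0, one of i,j is 0
    · -- k = 0, l ≠ 0, i = 0, j ≠ 0 : D 0 j 0 l 0
      subst hk; subst hi
      exact le_trans (hCore j l hj hl) hQ2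
    · -- k = 0, l ≠ 0, i ≠ 0, j = 0 : D i 0 0 l 0 = -D 0 i 0 l 0
      subst hk; subst hj
      rw [hD1 i 0 0 l 0, neg_sq]
      exact le_trans (hCore i l hi hl) hQ2
    · -- k ≠ 0, l = 0, i = 0, j ≠ 0 : D 0 j k 0 0 = -D 0 j 0 k 0
      subst hl; subst hi
      rw [hD2 0 j k 0 0, neg_sq]
      exact le_trans (hCore j k hj hk) hQ2
    · -- k ≠ 0, l = 0, i ≠ 0, j = 0 : D i 0 k 0 0
      subst hl; subst hj
      rw [hD1 i 0 k 0 0, neg_sq, hD2 0 i k 0 0, neg_sq]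
      exact le_trans (hCore i k hi hk) hQ2
  have hsum : T0 ≤ (n+1:ℝ)^4 * (c*((S-T0)+E0)) := by
    have h1 : T0 ≤ ∑ (_ : Fin (n+1)), ∑ (_ : Fin (n+1)), ∑ (_ : Fin (n+1)),
        ∑ (_ : Fin (n+1)), c*((S-T0)+E0) := by
      rw [hT0def]
      refine Finset.sum_le_sum fun i _ => Finset.sum_le_sum fun j _ =>
        Finset.sum_le_sum fun k _ => Finset.sum_le_sum fun l _ => hpt i j k l
    calc T0 ≤ _ := h1
      _ = (n+1:ℝ)^4 * (c*((S-T0)+E0)) := by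
          simp [Finset.sum_const, Finset.card_univ, Fintype.card_fin]
          push_cast
          ring
  linarith


lemma cs4 {m : ℕ} (X Y : Fin m → Fin m → Fin m → Fin m → ℝ) :
    (∑ i, ∑ j, ∑ k, ∑ l, X i j k l * Y i j k l)^2
      ≤ (∑ i, ∑ j, ∑ k, ∑ l, (X i j k l)^2) * ∑ i, ∑ j, ∑ k, ∑ l, (Y i j k l)^2 := by
  have h := Finset.sum_mul_sq_le_sq_mul_sq Finset.univ
    (fun t : Fin m × Fin m × Fin m × Fin m => X t.1 t.2.1 t.2.2.1 t.2.2.2)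
    (fun t => Y t.1 t.2.1 t.2.2.1 t.2.2.2)
  simpa [Fintype.sum_prod_type] using h

/-- improved Kato inequality `|∇|Rm||² ≤ (1 − η(n))|∇Rm|² + C(n)|∇Ric|²`,
stated pointwise in components in a normal frame (multiplied through by `|Rm|²`):
`R i j k l` are the components of `Rm`, `DR i j k l p = R_{ijkl,p}` those of `∇Rm`, and
`DRic i j p = Ric_{ij,p}` those of `∇Ric`; the hypotheses are the curvature symmetries,
the second Bianchi identity and the contracted relation defining `∇Ric`. -/
theorem improved_kato_inequality :
    ∀ n : ℕ, ∃ η C : ℝ, 0 < η ∧ η < 1 ∧ 0 < C ∧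
    ∀ (R : Fin (n+1) → Fin (n+1) → Fin (n+1) → Fin (n+1) → ℝ)
      (DR : Fin (n+1) → Fin (n+1) → Fin (n+1) → Fin (n+1) → Fin (n+1) → ℝ)
      (DRic : Fin (n+1) → Fin (n+1) → Fin (n+1) → ℝ),
      (∀ i j k l, R i j k l = -R j i k l) →
      (∀ i j k l, R i j k l = -R i j l k) →
      (∀ i j k l, R i j k l = R k l i j) →
      (∀ i j k l p, DR i j k l p = -DR j i k l p) →
      (∀ i j k l p, DR i j k l p = -DR i j l k p) →
      (∀ i j k l p, DR i j k l p = DR k l i j p) →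
      -- second Bianchi identity: R_{ijkl,p} + R_{ijlp,k} + R_{ijpk,l} = 0
      (∀ i j k l p, DR i j k l p + DR i j l p k + DR i j p k l = 0) →
      -- contracted second derivative data: Ric_{ij,p} = Σ_a R_{aija,p}
      (∀ i j p, DRic i j p = ∑ a, DR a i j a p) →
      (∑ p, (∑ i, ∑ j, ∑ k, ∑ l, DR i j k l p * R i j k l)^2) ≤
        ((1 - η) * (∑ i, ∑ j, ∑ k, ∑ l, ∑ p, (DR i j k l p)^2)
            + C * (∑ i, ∑ j, ∑ p, (DRic i j p)^2))
          * (∑ i, ∑ j, ∑ k, ∑ l, (R i j k l)^2) := by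
  intro n
  set K : ℝ := (n+1:ℝ)^4 * (8*(n+1:ℝ)^2+2) with hK
  have hKpos : 0 < K := by positivity
  have hK1 : (0:ℝ) < K + 1 := by linarith
  have hetapos : 0 < 1/(K+1) := by positivity
  have hetalt : 1/(K+1) < 1 := by rw [div_lt_one hK1]; linarith
  refine ⟨1/(K+1), K, hetapos, hetalt, hKpos, ?_⟩
  intro R DR DRic hR1 hR2 hR3 hD1 hD2 hD3 hB hC
  set S : ℝ := ∑ i, ∑ j, ∑ k, ∑ l, ∑ p, (DR i j k l p)^2 with hS
  set E : ℝ := ∑ i, ∑ j, ∑ p, (DRic i j p)^2 with hE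
  set NR : ℝ := ∑ i, ∑ j, ∑ k, ∑ l, (R i j k l)^2 with hNR
  have hS_nonneg : 0 ≤ S := Finset.sum_nonneg fun _ _ => Finset.sum_nonneg fun _ _ =>
    Finset.sum_nonneg fun _ _ => Finset.sum_nonneg fun _ _ =>
    Finset.sum_nonneg fun _ _ => sq_nonneg _
  have hE_nonneg : 0 ≤ E := Finset.sum_nonneg fun _ _ => Finset.sum_nonneg fun _ _ =>
    Finset.sum_nonneg fun _ _ => sq_nonneg _
  have hNR_nonneg : 0 ≤ NR := Finset.sum_nonneg fun _ _ => Finset.sum_nonneg fun _ _ =>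
    Finset.sum_nonneg fun _ _ => Finset.sum_nonneg fun _ _ => sq_nonneg _
  have hRHS_nonneg : 0 ≤ ((1 - 1/(K+1)) * S + K * E) * NR := by
    apply mul_nonneg _ hNR_nonneg
    apply add_nonneg (mul_nonneg (by linarith) hS_nonneg) (mul_nonneg hKpos.le hE_nonneg)
  set a : Fin (n+1) → ℝ := fun p => ∑ i, ∑ j, ∑ k, ∑ l, DR i j k l p * R i j k l with ha
  show ∑ p, (a p)^2 ≤ ((1 - 1/(K+1)) * S + K * E) * NR
  have hA_nonneg : 0 ≤ ∑ p, (a p)^2 := Finset.sum_nonneg fun _ _ => sq_nonneg _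
  rcases eq_or_lt_of_le hA_nonneg with hA0 | hApos
  · rw [← hA0]; exact hRHS_nonneg
  · set s : ℝ := Real.sqrt (∑ p, (a p)^2) with hsdef
    have hs2 : s^2 = ∑ p, (a p)^2 := Real.sq_sqrt hA_nonneg
    have hspos : 0 < s := Real.sqrt_pos.mpr hApos
    have hw : ∑ p, (a p / s) * (a p / s) = 1 := by
      have h1 : ∀ p, (a p / s) * (a p / s) = (a p)^2 / s^2 := by
        intro p; rw [sq, sq]; ring
      rw [Finset.sum_congr rfl fun p _ => h1 p, ← Finset.sum_div, hs2]
      field_simp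
    obtain ⟨b, hb, hb0⟩ := householder (fun p => a p / s) hw 0
    have hframe := frame_lemma (rot5 b DR) (rot3 b DRic)
      (rot5_swap12 b DR hD1) (rot5_swap34 b DR hD2) (rot5_pairswap b DR hD3)
      (rot5_bianchi b DR hB)
      (fun i j p => (rot5_contract b hb DR DRic hC i j p).symm)
    set T0 : ℝ := ∑ i, ∑ j, ∑ k, ∑ l, (rot5 b DR i j k l 0)^2 with hT0
    rw [rot5_norm b hb DR, ← hS, ← hK] at hframe
    have hE0 : ∑ i, ∑ j, (rot3 b DRic i j 0)^2 ≤ E := by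
      apply rot3_E_bound b hb DRic 0
      calc ∑ e, b 0 e * b 0 e = ∑ e, (a e / s) * (a e / s) :=
            Finset.sum_congr rfl fun e _ => by rw [hb0 e]
        _ = 1 := hw
    have ha0 : ∑ i, ∑ j, ∑ k, ∑ l, rot5 b DR i j k l 0 * rot4 b R i j k l = s := by
      rw [rot45_pair b hb DR R 0]
      have h1 : ∀ e, b 0 e * (∑ i, ∑ j, ∑ k, ∑ l, DR i j k l e * R i j k l)
          = (a e)^2 / s := by
        intro e; rw [hb0 e]
        show a e / s * a e = (a e)^2 / s
        rw [sq]; ring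
      rw [Finset.sum_congr rfl fun e _ => h1 e, ← Finset.sum_div, ← hs2, sq]
      field_simp
    have hcs : s^2 ≤ T0 * NR := by
      rw [← ha0, hT0, hNR, ← rot4_norm b hb R]
      exact cs4 (fun i j k l => rot5 b DR i j k l 0) (rot4 b R)
    have h6 : (K+1) * T0 ≤ K * S + K * E := by nlinarith [hframe, hKpos, mul_le_mul_of_nonneg_left hE0 hKpos.le]
    have h7 : T0 ≤ (1 - 1/(K+1)) * S + K * E := by
      rw [show (1 - 1/(K+1)) * S + K * E = (K * S + K*(K+1)*E)/(K+1) by field_simp; ring]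
      rw [le_div_iff₀ hK1]
      nlinarith [h6, mul_nonneg (mul_nonneg hKpos.le hKpos.le) hE_nonneg]
    calc ∑ p, (a p)^2 = s^2 := hs2.symm
      _ ≤ T0 * NR := hcs
      _ ≤ ((1 - 1/(K+1)) * S + K * E) * NR := mul_le_mul_of_nonneg_right h7 hNR_nonneg
end

section
/- Fix a direction e₁ in a normal frame at a point of a Riemannian n-manifold and set Ξ = Σ_{ijkl} Σ_{p≥2} (R_{ijkl,p})² + Σ_{ijp} (Ric_{ij,p})². Then there is a dimensional constant C(n) such that Σ_{ijkl} (R_{ijkl,1})² ≤ C(n) Ξ. -/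
open BigOperators

/-- in a normal frame with distinguished direction `e₁` (index `0`), the
derivatives of curvature in the direction `e₁` are controlled by the derivatives in the
other directions together with the derivatives of the Ricci tensor:
`Σ_{ijkl} (R_{ijkl,1})² ≤ C(n) Ξ` where
`Ξ = Σ_{ijkl} Σ_{p≥2} (R_{ijkl,p})² + Σ_{ijp} (Ric_{ij,p})²`.
Hypotheses: curvature symmetries of `∇Rm`, the second Bianchi identity and the trace
relation `Ric_{ij,p} = Σ_a R_{aija,p}`. -/
theorem curvature_derivative_first_direction_bound :
    ∀ n : ℕ, ∃ C : ℝ, 0 < C ∧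
    ∀ (DR : Fin (n+1) → Fin (n+1) → Fin (n+1) → Fin (n+1) → Fin (n+1) → ℝ)
      (DRic : Fin (n+1) → Fin (n+1) → Fin (n+1) → ℝ),
      (∀ i j k l p, DR i j k l p = -DR j i k l p) →
      (∀ i j k l p, DR i j k l p = -DR i j l k p) →
      (∀ i j k l p, DR i j k l p = DR k l i j p) →
      -- second Bianchi identity: R_{ijkl,p} + R_{ijlp,k} + R_{ijpk,l} = 0
      (∀ i j k l p, DR i j k l p + DR i j l p k + DR i j p k l = 0) →
      -- trace relation: Ric_{ij,p} = Σ_a R_{aija,p}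
      (∀ i j p, DRic i j p = ∑ a, DR a i j a p) →
      (∑ i, ∑ j, ∑ k, ∑ l, (DR i j k l 0)^2) ≤
        C * ((∑ i, ∑ j, ∑ k, ∑ l, ∑ p, (if p = 0 then 0 else (DR i j k l p)^2))
              + ∑ i, ∑ j, ∑ p, (DRic i j p)^2) := by
  intro n
  refine ⟨((n:ℝ)+1)^4 * (8*(n:ℝ)^2 + 6), by positivity, ?_⟩
  intro DR DRic ha1 ha2 hsym hB hRic
  set Ξ := (∑ i, ∑ j, ∑ k, ∑ l, ∑ p, (if p = 0 then 0 else (DR i j k l p)^2))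
              + ∑ i, ∑ j, ∑ p, (DRic i j p)^2 with hΞdef
  have hΞ0 : 0 ≤ Ξ := by
    apply add_nonneg
    · refine Finset.sum_nonneg fun i _ => Finset.sum_nonneg fun j _ =>
        Finset.sum_nonneg fun k _ => Finset.sum_nonneg fun l _ =>
        Finset.sum_nonneg fun p _ => ?_
      split_ifs <;> positivity
    · positivity
  have key : ∀ (f : Fin (n+1) → ℝ), (∀ x, 0 ≤ f x) → ∀ x, f x ≤ ∑ y, f y :=
    fun f hf x => Finset.single_le_sum (fun i _ => hf i) (Finset.mem_univ x)
  -- each DR-square with p ≠ 0 is bounded by Ξ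
  have hDRle : ∀ i j k l p, p ≠ 0 → (DR i j k l p)^2 ≤ Ξ := by
    intro i j k l p hp
    have nn1 : ∀ i j k l, (0:ℝ) ≤ ∑ p, (if p = 0 then 0 else (DR i j k l p)^2) :=
      fun i j k l => Finset.sum_nonneg fun p _ => by split_ifs <;> positivity
    have nn2 : ∀ i j k, (0:ℝ) ≤ ∑ l, ∑ p, (if p = 0 then 0 else (DR i j k l p)^2) :=
      fun i j k => Finset.sum_nonneg fun l _ => nn1 i j k l
    have nn3 : ∀ i j, (0:ℝ) ≤ ∑ k, ∑ l, ∑ p, (if p = 0 then 0 else (DR i j k l p)^2) :=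
      fun i j => Finset.sum_nonneg fun k _ => nn2 i j k
    have nn4 : ∀ i, (0:ℝ) ≤ ∑ j, ∑ k, ∑ l, ∑ p, (if p = 0 then 0 else (DR i j k l p)^2) :=
      fun i => Finset.sum_nonneg fun j _ => nn3 i j
    have step0 : (DR i j k l p)^2 = (if p = 0 then 0 else (DR i j k l p)^2) := by simp [hp]
    calc (DR i j k l p)^2
        ≤ ∑ p, (if p = 0 then 0 else (DR i j k l p)^2) := by
          rw [step0]
          exact key (fun p' => if p' = 0 then 0 else (DR i j k l p')^2)
            (fun x => by split_ifs <;> positivity) p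
      _ ≤ ∑ l, ∑ p, (if p = 0 then 0 else (DR i j k l p)^2) :=
          key (fun l' => ∑ p, (if p = 0 then 0 else (DR i j k l' p)^2)) (nn1 i j k) l
      _ ≤ ∑ k, ∑ l, ∑ p, (if p = 0 then 0 else (DR i j k l p)^2) :=
          key (fun k' => ∑ l, ∑ p, (if p = 0 then 0 else (DR i j k' l p)^2)) (nn2 i j) k
      _ ≤ ∑ j, ∑ k, ∑ l, ∑ p, (if p = 0 then 0 else (DR i j k l p)^2) :=
          key (fun j' => ∑ k, ∑ l, ∑ p, (if p = 0 then 0 else (DR i j' k l p)^2)) (nn3 i) j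
      _ ≤ ∑ i, ∑ j, ∑ k, ∑ l, ∑ p, (if p = 0 then 0 else (DR i j k l p)^2) :=
          key (fun i' => ∑ j, ∑ k, ∑ l, ∑ p, (if p = 0 then 0 else (DR i' j k l p)^2)) nn4 i
      _ ≤ Ξ := le_add_of_nonneg_right (by positivity)
  have hRicle : ∀ i j p, (DRic i j p)^2 ≤ Ξ := by
    intro i j p
    have nn1 : ∀ i j, (0:ℝ) ≤ ∑ p, (DRic i j p)^2 := fun i j => by positivity
    have nn2 : ∀ i, (0:ℝ) ≤ ∑ j, ∑ p, (DRic i j p)^2 := fun i => by positivity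
    calc (DRic i j p)^2
        ≤ ∑ p, (DRic i j p)^2 :=
          key (fun p' => (DRic i j p')^2) (fun x => by positivity) p
      _ ≤ ∑ j, ∑ p, (DRic i j p)^2 :=
          key (fun j' => ∑ p, (DRic i j' p)^2) (nn1 i) j
      _ ≤ ∑ i, ∑ j, ∑ p, (DRic i j p)^2 :=
          key (fun i' => ∑ j, ∑ p, (DRic i' j p)^2) nn2 i
      _ ≤ Ξ := by
          apply le_add_of_nonneg_left
          refine Finset.sum_nonneg fun i _ => Finset.sum_nonneg fun j _ =>
            Finset.sum_nonneg fun k _ => Finset.sum_nonneg fun l _ =>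
            Finset.sum_nonneg fun p _ => ?_
          split_ifs <;> positivity
  -- Bianchi bound when k,l ≠ 0
  have h2 : ∀ i j k l, k ≠ 0 → l ≠ 0 → (DR i j k l 0)^2 ≤ 4*Ξ := by
    intro i j k l hk hl
    have hA := hDRle i j l 0 k hk
    have hC := hDRle i j 0 k l hl
    have e : DR i j k l 0 = -(DR i j l 0 k + DR i j 0 k l) := by
      have hb := hB i j k l 0; linarith
    rw [e]
    nlinarith [sq_nonneg (DR i j l 0 k - DR i j 0 k l)]
  have hzero : ∀ i j, DR i j 0 0 0 = 0 := by
    intro i j; have := ha2 i j 0 0 0; linarith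
  -- trace bound
  have hT : ∀ β γ, β ≠ 0 → γ ≠ 0 → (DR 0 β γ 0 0)^2 ≤ (8*(n:ℝ)^2+2)*Ξ := by
    intro β γ hβ hγ
    set s := (Finset.univ.erase (0 : Fin (n+1))) with hs
    have hid : DR 0 β γ 0 0
        = DRic β γ 0 + ∑ a ∈ s, (DR a β a 0 γ + DR a β 0 γ a) := by
      have h := hRic β γ 0
      rw [← Finset.add_sum_erase _ _ (Finset.mem_univ (0 : Fin (n+1)))] at h
      have h2' : ∑ a ∈ s, DR a β γ a 0
          = ∑ a ∈ s, (-(DR a β a 0 γ + DR a β 0 γ a)) := by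
        apply Finset.sum_congr rfl
        intro a _
        have := hB a β γ a 0
        linarith
      rw [Finset.sum_neg_distrib] at h2'
      rw [← hs] at h
      linarith
    have hcard : s.card = n := by rw [hs]; simp
    have hterm : ∀ a ∈ s, (DR a β a 0 γ + DR a β 0 γ a)^2 ≤ 4*Ξ := by
      intro a ha
      have ha0 : a ≠ 0 := Finset.ne_of_mem_erase ha
      have h1 := hDRle a β a 0 γ hγ
      have h2'' := hDRle a β 0 γ a ha0
      nlinarith [sq_nonneg (DR a β a 0 γ - DR a β 0 γ a)]
    have hsumsq : ∑ a ∈ s, (DR a β a 0 γ + DR a β 0 γ a)^2 ≤ (n:ℝ) * (4*Ξ) := by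
      calc ∑ a ∈ s, (DR a β a 0 γ + DR a β 0 γ a)^2
          ≤ ∑ _a ∈ s, 4*Ξ := Finset.sum_le_sum hterm
        _ = (n:ℝ) * (4*Ξ) := by rw [Finset.sum_const, hcard]; simp [mul_comm]
    have hS : (∑ a ∈ s, (DR a β a 0 γ + DR a β 0 γ a))^2
        ≤ (n:ℝ) * ∑ a ∈ s, (DR a β a 0 γ + DR a β 0 γ a)^2 := by
      have h := sq_sum_le_card_mul_sum_sq (s := s)
        (f := fun a => DR a β a 0 γ + DR a β 0 γ a) (α := ℝ)
      rwa [hcard] at h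
    have hS2 : (∑ a ∈ s, (DR a β a 0 γ + DR a β 0 γ a))^2 ≤ 4*(n:ℝ)^2*Ξ := by
      have := mul_le_mul_of_nonneg_left hsumsq (Nat.cast_nonneg n : (0:ℝ) ≤ n)
      nlinarith
    have hD := hRicle β γ 0
    rw [hid]
    nlinarith [sq_nonneg (DRic β γ 0 - ∑ a ∈ s, (DR a β a 0 γ + DR a β 0 γ a))]
  set K : ℝ := 8*(n:ℝ)^2 + 6 with hK
  -- bound for DR i j 0 l 0 with l ≠ 0
  have h3 : ∀ i j l, l ≠ 0 → (DR i j 0 l 0)^2 ≤ K*Ξ := by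
    intro i j l hl
    rw [hsym i j 0 l 0]
    by_cases hi : i = 0
    · subst hi
      by_cases hj : j = 0
      · subst hj
        have e : DR 0 l 0 0 0 = 0 := by
          have := ha2 0 l 0 0 0; linarith
        rw [e]; nlinarith
      · have e : DR 0 l 0 j 0 = -DR 0 l j 0 0 := ha2 0 l 0 j 0
        rw [e, neg_sq]
        have := hT l j hl hj
        nlinarith
    · by_cases hj : j = 0
      · subst hj
        have := hT l i hl hi
        nlinarith
      · have := h2 0 l i j hi hj
        nlinarith
  -- pointwise bound
  have M : ∀ i j k l, (DR i j k l 0)^2 ≤ K*Ξ := by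
    intro i j k l
    by_cases hk : k = 0
    · subst hk
      by_cases hl : l = 0
      · subst hl; rw [hzero i j]; nlinarith
      · exact h3 i j l hl
    · by_cases hl : l = 0
      · subst hl
        have e : DR i j k 0 0 = -DR i j 0 k 0 := ha2 i j k 0 0
        rw [e, neg_sq]
        exact h3 i j k hk
      · have := h2 i j k l hk hl
        nlinarith
  calc ∑ i, ∑ j, ∑ k, ∑ l, (DR i j k l 0)^2
      ≤ ∑ i : Fin (n+1), ∑ j : Fin (n+1), ∑ k : Fin (n+1), ∑ l : Fin (n+1), K*Ξ := by
        refine Finset.sum_le_sum fun i _ => Finset.sum_le_sum fun j _ =>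
          Finset.sum_le_sum fun k _ => Finset.sum_le_sum fun l _ => M i j k l
    _ = ((n:ℝ)+1)^4 * (8*(n:ℝ)^2 + 6) * Ξ := by
        simp [Finset.sum_const, Finset.card_univ, hK]
        ring
end

section
/- Let S ⊆ ℝᵐ (or a metric measure space with H^k) be a set, and suppose for every ε > 0 there is a countable family of k-rectifiable closed subsets R_ε(B_r(y_j)) ⊆ S ∩ B_r(y_j), over a countable dense set of centers y_j and rational radii r, with H^k(S ∩ B_r(y_j) \ R_ε(B_r(y_j))) < ε r^k. If ε < ε_m, where ε_m is the dimensional density constant, then S is k-rectifiable up to an H^k-null set; i.e., H^k(S \ R) = 0 where R is the union of all the sets R_ε(B_r(y_j)). -/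
open MeasureTheory Metric

/-- A set is `k`-rectifiable (up to an `H^k`-null set) if, away from an `H^k`-null set,
it is covered by countably many Lipschitz images of `ℝ^k`. -/
def IsRectifiableSet (k m : ℕ) (S : Set (EuclideanSpace ℝ (Fin m))) : Prop :=
  ∃ (N : Set (EuclideanSpace ℝ (Fin m)))
    (f : ℕ → EuclideanSpace ℝ (Fin k) → EuclideanSpace ℝ (Fin m)) (L : ℕ → NNReal),
    Measure.hausdorffMeasure (k:ℝ) N = 0 ∧
    (∀ i, LipschitzWith (L i) (f i)) ∧
    S ⊆ N ∪ ⋃ i, Set.range (f i)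

lemma isRectifiableSet_empty (k m : ℕ) : IsRectifiableSet k m ∅ :=
  ⟨∅, fun _ _ => 0, fun _ => 0, by simp, fun _ => LipschitzWith.const 0, by simp⟩

lemma isRectifiableSet_iUnion {k m : ℕ} {ι : Type} [Encodable ι]
    (D : ι → Set (EuclideanSpace ℝ (Fin m))) (h : ∀ i, IsRectifiableSet k m (D i)) :
    IsRectifiableSet k m (⋃ i, D i) := by
  choose N f L hN hf hsub using h
  refine ⟨⋃ i, N i,
    fun n => ((Encodable.decode (α := ι × ℕ) n).elim (fun _ => 0) (fun p => f p.1 p.2)),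
    fun n => ((Encodable.decode (α := ι × ℕ) n).elim 0 (fun p => L p.1 p.2)), ?_, ?_, ?_⟩
  · exact measure_iUnion_null hN
  · intro n
    cases hd : Encodable.decode (α := ι × ℕ) n with
    | none => simpa [hd] using LipschitzWith.const (α := EuclideanSpace ℝ (Fin k)) (0 : EuclideanSpace ℝ (Fin m))
    | some p => simpa [hd] using hf p.1 p.2
  · intro x hx
    obtain ⟨i, hxi⟩ := Set.mem_iUnion.1 hx
    rcases hsub i hxi with hxN | hxr
    · exact Or.inl (Set.mem_iUnion.2 ⟨i, hxN⟩)
    · obtain ⟨j, hj⟩ := Set.mem_iUnion.1 hxr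
      obtain ⟨w, hw⟩ := hj
      refine Or.inr (Set.mem_iUnion.2 ⟨Encodable.encode (i, j), ⟨w, ?_⟩⟩)
      simp [Encodable.encodek, hw]

/-- if for some `ε` below the dimensional density constant `ε_m` a set `S`
admits, around a countable dense set of centers and rational radii, closed `k`-rectifiable
subsets `R_ε(B_r(y_j)) ⊆ S ∩ B_r(y_j)` with `H^k(S ∩ B_r(y_j) \ R_ε(B_r(y_j))) < ε r^k`,
then `S` is `k`-rectifiable up to an `H^k`-null set. -/
theorem rectifiable_from_local_approximations (k m : ℕ) :
    ∃ εm : ℝ, 0 < εm ∧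
    ∀ (S : Set (EuclideanSpace ℝ (Fin m))) (ε : ℝ), 0 < ε → ε < εm →
    (∃ y : ℕ → EuclideanSpace ℝ (Fin m),
      (∀ j, y j ∈ closure S) ∧ S ⊆ closure (Set.range y) ∧
      ∀ (j : ℕ) (q : ℚ), 0 < q →
        ∃ R : Set (EuclideanSpace ℝ (Fin m)),
          IsClosed R ∧ R ⊆ S ∩ ball (y j) q ∧ IsRectifiableSet k m R ∧
          Measure.hausdorffMeasure (k:ℝ) ((S ∩ ball (y j) q) \ R)
            < ENNReal.ofReal (ε * (q:ℝ)^k)) →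
    ∃ R : Set (EuclideanSpace ℝ (Fin m)),
      R ⊆ S ∧ IsRectifiableSet k m R ∧
      Measure.hausdorffMeasure (k:ℝ) (S \ R) = 0 := by
  refine ⟨1/2, by norm_num, ?_⟩
  rintro S ε hε hεm ⟨y, -, hyd, h⟩
  have hε1 : ENNReal.ofReal ε < 1 := by
    rw [← ENNReal.ofReal_one]
    exact (ENNReal.ofReal_lt_ofReal_iff_of_nonneg hε.le).2 (by linarith)
  -- choose the rectifiable pieces
  have H : ∀ p : ℕ × ℚ, ∃ R' : Set (EuclideanSpace ℝ (Fin m)),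
      R' ⊆ S ∧ IsRectifiableSet k m R' ∧
      (0 < p.2 → Measure.hausdorffMeasure (k:ℝ) ((S ∩ ball (y p.1) p.2) \ R')
            < ENNReal.ofReal (ε * (p.2:ℝ)^k)) := by
    rintro ⟨j, q⟩
    by_cases hq : 0 < q
    · obtain ⟨R', _, hRsub, hRrect, hRm⟩ := h j q hq
      exact ⟨R', fun x hx => (hRsub hx).1, hRrect, fun _ => hRm⟩
    · exact ⟨∅, by simp, isRectifiableSet_empty k m, fun hq' => absurd hq' hq⟩
  choose g hgS hgrect hgm using H
  set R : Set (EuclideanSpace ℝ (Fin m)) := ⋃ p : ℕ × ℚ, g p with hRdef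
  refine ⟨R, Set.iUnion_subset hgS, isRectifiableSet_iUnion g hgrect, ?_⟩
  -- core density-type estimate
  have core : ∀ E : Set (EuclideanSpace ℝ (Fin m)), E ⊆ S \ R → E.Nonempty →
      EMetric.diam E ≠ ⊤ →
      Measure.hausdorffMeasure (k:ℝ) E ≤ ENNReal.ofReal ε * EMetric.diam E ^ (k:ℝ) := by
    rintro E hE ⟨x, hx⟩ hdne
    set d0 := (EMetric.diam E).toReal with hd0
    have hd0nn : 0 ≤ d0 := ENNReal.toReal_nonneg
    have stepA : ∀ q' : ℚ, d0 < (q':ℝ) →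
        Measure.hausdorffMeasure (k:ℝ) E ≤ ENNReal.ofReal (ε * (q':ℝ)^k) := by
      intro q' hq'
      have hq'pos : 0 < q' := by exact_mod_cast lt_of_le_of_lt hd0nn hq'
      have hxS : x ∈ closure (Set.range y) := hyd (hE hx).1
      obtain ⟨b, ⟨j, rfl⟩, hb⟩ := Metric.mem_closure_iff.1 hxS _ (sub_pos.2 hq')
      have hEb : E ⊆ (S ∩ ball (y j) q') \ g (j, q') := by
        intro z hz
        refine ⟨⟨(hE hz).1, ?_⟩,
          fun hzg => (hE hz).2 (Set.mem_iUnion.2 ⟨(j, q'), hzg⟩)⟩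
        have hzx : dist z x ≤ d0 := by
          rw [dist_edist]
          exact ENNReal.toReal_mono hdne (EMetric.edist_le_diam_of_mem hz hx)
        have : dist z (y j) < (q':ℝ) :=
          calc dist z (y j) ≤ dist z x + dist x (y j) := dist_triangle _ _ _
            _ < d0 + ((q':ℝ) - d0) := add_lt_add_of_le_of_lt hzx hb
            _ = (q':ℝ) := by ring
        exact mem_ball.2 this
      exact ((measure_mono hEb).trans_lt (hgm (j, q') hq'pos)).le
    -- take the limit along shrinking radii
    have h1 : Filter.Tendsto (fun n : ℕ => d0 + ((n:ℝ)+1)⁻¹) Filter.atTop (nhds d0) := by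
      have := tendsto_one_div_add_atTop_nhds_zero_nat (𝕜 := ℝ)
      simpa [one_div] using tendsto_const_nhds.add this
    have hlim : Filter.Tendsto (fun n : ℕ => ENNReal.ofReal (ε * (d0 + ((n:ℝ)+1)⁻¹)^k))
        Filter.atTop (nhds (ENNReal.ofReal (ε * d0^k))) :=
      (ENNReal.continuous_ofReal.tendsto _).comp (tendsto_const_nhds.mul (h1.pow k))
    have key : ∀ n : ℕ, Measure.hausdorffMeasure (k:ℝ) E
        ≤ ENNReal.ofReal (ε * (d0 + ((n:ℝ)+1)⁻¹)^k) := by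
      intro n
      have hpos : d0 < d0 + ((n:ℝ)+1)⁻¹ :=
        lt_add_of_pos_right _ (by positivity)
      obtain ⟨q', hq1, hq2⟩ := exists_rat_btwn hpos
      refine (stepA q' hq1).trans (ENNReal.ofReal_le_ofReal ?_)
      have hpow : (q':ℝ)^k ≤ (d0 + ((n:ℝ)+1)⁻¹)^k :=
        pow_le_pow_left₀ (le_of_lt (lt_of_le_of_lt hd0nn hq1)) hq2.le k
      exact mul_le_mul_of_nonneg_left hpow hε.le
    have hfin : Measure.hausdorffMeasure (k:ℝ) E ≤ ENNReal.ofReal (ε * d0^k) :=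
      ge_of_tendsto' hlim key
    calc Measure.hausdorffMeasure (k:ℝ) E ≤ ENNReal.ofReal (ε * d0^k) := hfin
      _ = ENNReal.ofReal ε * EMetric.diam E ^ (k:ℝ) := by
          rw [ENNReal.ofReal_mul hε.le, ENNReal.ofReal_pow hd0nn,
            ENNReal.ofReal_toReal hdne, ENNReal.rpow_natCast]
  -- main claim: any finite-measure subset of S \ R is null
  have claim : ∀ T : Set (EuclideanSpace ℝ (Fin m)), T ⊆ S \ R →
      Measure.hausdorffMeasure (k:ℝ) T ≠ ⊤ → Measure.hausdorffMeasure (k:ℝ) T = 0 := by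
    intro T hT hTfin
    set t := Measure.hausdorffMeasure (k:ℝ) T with ht
    have main : ∀ η : ENNReal, η ≠ 0 → t ≤ ENNReal.ofReal ε * (t + η) := by
      intro η hη
      have hinf : (⨅ (c : ℕ → Set (EuclideanSpace ℝ (Fin m))) (_ : T ⊆ ⋃ n, c n)
          (_ : ∀ n, EMetric.diam (c n) ≤ 1),
          ∑' n, ⨆ _ : (c n).Nonempty, EMetric.diam (c n) ^ (k:ℝ)) ≤ t := by
        rw [ht, Measure.hausdorffMeasure_apply]
        exact le_iSup₂ (f := fun (r : ENNReal) (_ : 0 < r) =>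
          ⨅ (c : ℕ → Set (EuclideanSpace ℝ (Fin m))) (_ : T ⊆ ⋃ n, c n)
            (_ : ∀ n, EMetric.diam (c n) ≤ r),
            ∑' n, ⨆ _ : (c n).Nonempty, EMetric.diam (c n) ^ (k:ℝ)) (1 : ENNReal) one_pos
      have hlt := lt_of_le_of_lt hinf (ENNReal.lt_add_right hTfin hη)
      simp only [iInf_lt_iff] at hlt
      obtain ⟨c, hcov, hdiam, hsum⟩ := hlt
      have hTsub : T ⊆ ⋃ n, T ∩ c n := by
        intro z hz
        obtain ⟨n, hn⟩ := Set.mem_iUnion.1 (hcov hz)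
        exact Set.mem_iUnion.2 ⟨n, hz, hn⟩
      calc t ≤ ∑' n, Measure.hausdorffMeasure (k:ℝ) (T ∩ c n) :=
            (measure_mono hTsub).trans (measure_iUnion_le _)
        _ ≤ ∑' n, ENNReal.ofReal ε * (⨆ _ : (c n).Nonempty, EMetric.diam (c n) ^ (k:ℝ)) := by
            refine ENNReal.tsum_le_tsum fun n => ?_
            rcases Set.eq_empty_or_nonempty (T ∩ c n) with he | hne
            · simp [he]
            · have hnec : (c n).Nonempty := ⟨hne.choose, hne.choose_spec.2⟩
              have hdsub : EMetric.diam (T ∩ c n) ≤ EMetric.diam (c n) :=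
                EMetric.diam_mono Set.inter_subset_right
              have hdfin : EMetric.diam (T ∩ c n) ≠ ⊤ :=
                (hdsub.trans_lt ((hdiam n).trans_lt (by norm_num))).ne
              rw [ciSup_pos hnec]
              refine (core _ (fun z hz => hT hz.1) hne hdfin).trans ?_
              exact mul_le_mul_right (ENNReal.rpow_le_rpow hdsub (Nat.cast_nonneg k)) _
        _ = ENNReal.ofReal ε *
              ∑' n, ⨆ _ : (c n).Nonempty, EMetric.diam (c n) ^ (k:ℝ) :=
            ENNReal.tsum_mul_left
        _ ≤ ENNReal.ofReal ε * (t + η) := mul_le_mul_right hsum.le _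
    have h2 : t ≤ ENNReal.ofReal ε * t := by
      refine ENNReal.le_of_forall_pos_le_add fun δ hδ _ => ?_
      calc t ≤ ENNReal.ofReal ε * (t + δ) :=
            main δ (by exact_mod_cast hδ.ne')
        _ = ENNReal.ofReal ε * t + ENNReal.ofReal ε * δ := mul_add _ _ _
        _ ≤ ENNReal.ofReal ε * t + 1 * δ :=
            add_le_add_right (mul_le_mul_left hε1.le _) _
        _ = ENNReal.ofReal ε * t + δ := by rw [one_mul]
    by_contra ht0
    have hlt : ENNReal.ofReal ε * t < 1 * t :=
      (mul_comm _ _).trans_lt ((ENNReal.mul_lt_mul_right ht0 hTfin hε1).trans_eq (mul_comm _ _))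
    rw [one_mul] at hlt
    exact lt_irrefl t (h2.trans_lt hlt)
  -- cover S \ R by countably many balls of finite excess measure
  have hnull : ∀ j : ℕ, Measure.hausdorffMeasure (k:ℝ) ((S \ R) ∩ ball (y j) 1) = 0 := by
    intro j
    refine claim _ Set.inter_subset_left ?_
    have hsub : (S \ R) ∩ ball (y j) 1 ⊆ (S ∩ ball (y j) ((1:ℚ):ℝ)) \ g (j, 1) := by
      intro z hz
      refine ⟨⟨hz.1.1, by simpa using hz.2⟩,
        fun hzg => hz.1.2 (Set.mem_iUnion.2 ⟨(j, 1), hzg⟩)⟩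
    exact ((measure_mono hsub).trans_lt
      ((hgm (j, 1) one_pos).trans_le le_top)).ne
  have hcover : S \ R ⊆ ⋃ j : ℕ, (S \ R) ∩ ball (y j) 1 := by
    intro z hz
    obtain ⟨b, ⟨j, rfl⟩, hb⟩ := Metric.mem_closure_iff.1 (hyd hz.1) 1 one_pos
    exact Set.mem_iUnion.2 ⟨j, hz, mem_ball.2 hb⟩
  refine le_antisymm ?_ zero_le
  calc Measure.hausdorffMeasure (k:ℝ) (S \ R)
      ≤ ∑' j, Measure.hausdorffMeasure (k:ℝ) ((S \ R) ∩ ball (y j) 1) :=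
        (measure_mono hcover).trans (measure_iUnion_le _)
    _ = 0 := by simp [hnull]
end
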